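/- arXiv:0812.3141 — 5 statements merged into one kernel-verified Lean document; each statement's English description precedes it below -/
import Mathlib

section
/- Let f : (-1, ∞) → ℝ be defined by f(x) = 2^(-2/3)·(1+x)^(-2) + 2^(1/3)·(1+x). Then for every x > -1, f(x) ≥ 3·2^(-2/3) + 3·2^(-14/3)·min(x², 1). -/
/-- For `f x = 2^(-2/3) (1+x)^(-2) + 2^(1/3) (1+x)` and every `x > -1`,
`f x ≥ 3·2^(-2/3) + 3·2^(-14/3)·min(x², 1)`. -/
theorem stmt_1 (x : ℝ) (hx : x > -1) :
    (2:ℝ) ^ ((-2:ℝ)/3) * (1 + x) ^ ((-2:ℝ)) + (2:ℝ) ^ ((1:ℝ)/3) * (1 + x)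
      ≥ 3 * (2:ℝ) ^ ((-2:ℝ)/3) + 3 * (2:ℝ) ^ ((-14:ℝ)/3) * min (x ^ 2) 1 := by
  have ht : (0:ℝ) < 1 + x := by linarith
  set c : ℝ := (2:ℝ) ^ ((-2:ℝ)/3) with hc
  have hcpos : 0 < c := Real.rpow_pos_of_pos (by norm_num) _
  have h1 : (2:ℝ) ^ ((1:ℝ)/3) = 2 * c := by
    rw [hc, show (1:ℝ)/3 = 1 + (-2)/3 by norm_num, Real.rpow_add (by norm_num),
      Real.rpow_one]
  have h2 : (2:ℝ) ^ ((-14:ℝ)/3) = c / 16 := by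
    rw [hc, show ((-14:ℝ)/3) = (-2)/3 + (-4) by norm_num,
      Real.rpow_add (by norm_num)]
    rw [show ((-4:ℝ)) = ((-4:ℤ):ℝ) by norm_num, Real.rpow_intCast]
    norm_num; ring
  have h3 : (1 + x) ^ ((-2:ℝ)) = ((1 + x) ^ 2)⁻¹ := by
    rw [show ((-2:ℝ)) = ((-2:ℤ):ℝ) by norm_num, Real.rpow_intCast]
    simp [zpow_neg]
  rw [h1, h2, h3]
  have key : ((1 + x) ^ 2)⁻¹ + 2 * (1 + x) ≥ 3 + (3/16) * min (x ^ 2) 1 := by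
    have hsq : (0:ℝ) < (1 + x) ^ 2 := by positivity
    rcases le_total (x ^ 2) 1 with h | h
    · rw [min_eq_left h]
      rw [ge_iff_le, ← sub_nonneg]
      have h4 : ((1 + x) ^ 2)⁻¹ + 2 * (1 + x) - (3 + 3/16 * x ^ 2)
          = (x ^ 2 * (-3 * (1+x)^2 + 32 * (1+x) + 16) / 16) / ((1+x)^2) := by
        field_simp
        ring
      rw [h4]
      have hx2 : x ≤ 1 := by nlinarith
      apply div_nonneg _ (le_of_lt hsq)
      have : -3 * (1+x)^2 + 32 * (1+x) + 16 ≥ 0 := by nlinarith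
      positivity
    · rw [min_eq_right h]
      have hx1 : 1 ≤ x := by nlinarith
      have : (0:ℝ) < ((1 + x) ^ 2)⁻¹ := by positivity
      nlinarith
  nlinarith [mul_le_mul_of_nonneg_left key (le_of_lt hcpos)]
end

section
/- Let s : [0,1] → ℝ be twice continuously differentiable, and let I = [a, b] ⊆ [0,1] with center c and length ℓ = b − a. Then |∫_I (s(x) − s(c))² dx − s'(c)²·ℓ³/12| ≤ L·ℓ⁴·‖s''‖_∞·(‖s'‖_∞ + ‖s''‖_∞) for some absolute constant L. -/
/-- There is an absolute constant `L` such that: if `s` is C² with `|s'| ≤ M₁`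
and `|s''| ≤ M₂` on `[0,1]`, and `I = [a,b] ⊆ [0,1]` has center `c` and length
`ℓ = b−a`, then `|∫_I (s−s(c))² − s'(c)²·ℓ³/12| ≤ L·ℓ⁴·M₂·(M₁+M₂)`. -/
theorem stmt_5 :
    ∃ L : ℝ, 0 < L ∧
      ∀ (s : ℝ → ℝ), ContDiff ℝ 2 s →
      ∀ (M₁ M₂ : ℝ),
        (∀ x ∈ Set.Icc (0:ℝ) 1, |deriv s x| ≤ M₁) →
        (∀ x ∈ Set.Icc (0:ℝ) 1, |deriv (deriv s) x| ≤ M₂) →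
      ∀ (a b : ℝ), 0 ≤ a → a < b → b ≤ 1 →
        |(∫ x in a..b, (s x - s ((a + b) / 2)) ^ 2)
            - (deriv s ((a + b) / 2)) ^ 2 * (b - a) ^ 3 / 12|
          ≤ L * (b - a) ^ 4 * M₂ * (M₁ + M₂) := by
  refine ⟨1, one_pos, ?_⟩
  intro s hs M₁ M₂ h1 h2 a b ha hab hb
  set c : ℝ := (a + b) / 2 with hc
  set ℓ : ℝ := b - a with hℓ
  have hs2 : ContDiff ℝ (1 + 1) s := by norm_num; exact hs
  obtain ⟨hd1, -, hs'⟩ := contDiff_succ_iff_deriv.mp hs2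
  have hd2 : Differentiable ℝ (deriv s) := hs'.differentiable one_ne_zero
  have hc2 : Continuous (deriv (deriv s)) := contDiff_one_iff_deriv.mp hs' |>.2
  have hcs : Continuous s := hd1.continuous
  have hcs' : Continuous (deriv s) := hd2.continuous
  have hcmem : c ∈ Set.Icc (0:ℝ) 1 := ⟨by simp [hc]; linarith, by simp [hc]; linarith⟩
  have hM₂ : 0 ≤ M₂ := le_trans (abs_nonneg _) (h2 c hcmem)
  have hM₁ : 0 ≤ M₁ := le_trans (abs_nonneg _) (h1 c hcmem)
  have hℓpos : 0 < ℓ := by simp [hℓ]; linarith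
  have hℓ1 : ℓ ≤ 1 := by simp [hℓ]; linarith
  -- Lipschitz bound on deriv s
  have hLip : ∀ t ∈ Set.Icc (0:ℝ) 1, |deriv s t - deriv s c| ≤ M₂ * |t - c| := by
    intro t ht
    have hsub : Set.uIcc c t ⊆ Set.Icc (0:ℝ) 1 :=
      Set.ordConnected_Icc.uIcc_subset hcmem ht
    have hftc : ∫ u in c..t, deriv (deriv s) u = deriv s t - deriv s c :=
      intervalIntegral.integral_deriv_eq_sub (fun u _ => hd2 u)
        (hc2.intervalIntegrable _ _)
    rw [← hftc, ← Real.norm_eq_abs]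
    exact intervalIntegral.norm_integral_le_of_norm_le_const
      (fun u hu => by
        rw [Real.norm_eq_abs]; exact h2 u (hsub (Set.uIoc_subset_uIcc hu)))
  -- Taylor bound
  have hTay : ∀ x ∈ Set.Icc a b, |s x - s c - (x - c) * deriv s c| ≤ M₂ * (x - c) ^ 2 := by
    intro x hx
    have hxmem : x ∈ Set.Icc (0:ℝ) 1 := ⟨le_trans ha hx.1, le_trans hx.2 hb⟩
    have hftc : ∫ t in c..x, deriv s t = s x - s c :=
      intervalIntegral.integral_deriv_eq_sub (fun u _ => hd1 u)
        (hcs'.intervalIntegrable _ _)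
    have hint : s x - s c - (x - c) * deriv s c
        = ∫ t in c..x, (deriv s t - deriv s c) := by
      rw [intervalIntegral.integral_sub (hcs'.intervalIntegrable _ _)
        (intervalIntegrable_const (c := deriv s c)), hftc,
        intervalIntegral.integral_const, smul_eq_mul]
    rw [hint, ← Real.norm_eq_abs]
    have hb2 : ‖∫ t in c..x, (deriv s t - deriv s c)‖ ≤ (M₂ * |x - c|) * |x - c| := by
      apply intervalIntegral.norm_integral_le_of_norm_le_const
      intro t ht
      have ht' : t ∈ Set.uIcc c x := by
        exact Set.uIoc_subset_uIcc ht
      have htmem : t ∈ Set.Icc (0:ℝ) 1 :=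
        Set.ordConnected_Icc.uIcc_subset hcmem hxmem ht'
      have h3 : |t - c| ≤ |x - c| := by
        have := Set.abs_sub_left_of_mem_uIcc ht'
        simpa using this
      calc ‖deriv s t - deriv s c‖ ≤ M₂ * |t - c| := hLip t htmem
        _ ≤ M₂ * |x - c| := mul_le_mul_of_nonneg_left h3 hM₂
    calc ‖∫ t in c..x, (deriv s t - deriv s c)‖ ≤ (M₂ * |x - c|) * |x - c| := hb2
      _ = M₂ * (x - c) ^ 2 := by rw [mul_assoc, ← pow_two, sq_abs]
  -- exact integral of (x-c)^2
  have hG : (∫ x in a..b, (x - c) ^ 2 * (deriv s c) ^ 2)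
      = (deriv s c) ^ 2 * ℓ ^ 3 / 12 := by
    have : (∫ x in a..b, (x - c) ^ 2 * (deriv s c) ^ 2)
        = (∫ x in a..b, (x - c) ^ 2) * (deriv s c) ^ 2 :=
      intervalIntegral.integral_mul_const _ _
    rw [this]
    have h1' : (∫ x in a..b, (x - c) ^ 2) = ∫ x in (a - c)..(b - c), x ^ 2 := by
      rw [intervalIntegral.integral_comp_sub_right (fun x => x ^ 2) c]
    rw [h1', integral_pow]
    have hbc : b - c = ℓ / 2 := by rw [hc, hℓ]; ring
    have hac : a - c = -(ℓ / 2) := by rw [hc, hℓ]; ring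
    rw [hbc, hac]; ring
  -- main estimate
  have hiF : IntervalIntegrable (fun x => (s x - s c) ^ 2) MeasureTheory.volume a b :=
    (((hcs.sub continuous_const).pow 2)).intervalIntegrable _ _
  have hiG : IntervalIntegrable (fun x => (x - c) ^ 2 * (deriv s c) ^ 2)
      MeasureTheory.volume a b :=
    ((((continuous_id.sub continuous_const).pow 2).mul continuous_const)).intervalIntegrable _ _
  have hsplit : (∫ x in a..b, (s x - s c) ^ 2) - (deriv s c) ^ 2 * ℓ ^ 3 / 12
      = ∫ x in a..b, ((s x - s c) ^ 2 - (x - c) ^ 2 * (deriv s c) ^ 2) := by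
    rw [intervalIntegral.integral_sub hiF hiG, hG]
  rw [hsplit]
  set C : ℝ := M₂ * (ℓ/2)^2 * (M₂ * (ℓ/2)^2 + 2 * M₁ * (ℓ/2)) with hC
  have hbound : ‖∫ x in a..b, ((s x - s c) ^ 2 - (x - c) ^ 2 * (deriv s c) ^ 2)‖
      ≤ C * |b - a| := by
    apply intervalIntegral.norm_integral_le_of_norm_le_const
    intro x hx
    have hx' : x ∈ Set.Icc a b := Set.Ioc_subset_Icc_self (by rwa [Set.uIoc_of_le hab.le] at hx)
    have hxd : |x - c| ≤ ℓ / 2 := by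
      rw [abs_le]; constructor <;> [skip; skip] <;>
        (rw [hc, hℓ] at *; rcases hx' with ⟨h1x, h2x⟩; linarith)
    set u : ℝ := s x - s c
    set v : ℝ := (x - c) * deriv s c with hv
    have hR : |u - v| ≤ M₂ * (x - c) ^ 2 := hTay x hx'
    have hvb : |v| ≤ M₁ * |x - c| := by
      rw [hv, abs_mul, mul_comm M₁ |x - c|]
      exact mul_le_mul_of_nonneg_left (h1 c hcmem) (abs_nonneg _)
    have hveq : (x - c) ^ 2 * (deriv s c) ^ 2 = v ^ 2 := by rw [hv]; ring
    rw [hveq]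
    have hfac : u ^ 2 - v ^ 2 = (u - v) * (u + v) := by ring
    have hsq : (x - c) ^ 2 ≤ (ℓ/2) ^ 2 := by
      have := pow_le_pow_left₀ (abs_nonneg (x - c)) hxd 2
      rwa [sq_abs] at this
    calc ‖u ^ 2 - v ^ 2‖ = |u - v| * |u + v| := by rw [hfac, Real.norm_eq_abs, abs_mul]
      _ ≤ (M₂ * (x - c) ^ 2) * (|u - v| + 2 * |v|) := by
          apply mul_le_mul hR _ (abs_nonneg _) (by positivity)
          calc |u + v| = |(u - v) + 2 * v| := by ring_nf
            _ ≤ |u - v| + |2 * v| := abs_add_le _ _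
            _ = |u - v| + 2 * |v| := by rw [abs_mul]; norm_num
      _ ≤ C := by
          rw [hC]
          have hA : M₂ * (x - c) ^ 2 ≤ M₂ * (ℓ/2) ^ 2 :=
            mul_le_mul_of_nonneg_left hsq hM₂
          have h' : M₁ * |x - c| ≤ M₁ * (ℓ/2) := mul_le_mul_of_nonneg_left hxd hM₁
          have hRu : |u - v| ≤ M₂ * (ℓ/2) ^ 2 := le_trans hR hA
          have hB : |u - v| + 2 * |v| ≤ M₂ * (ℓ/2) ^ 2 + 2 * M₁ * (ℓ/2) := by
            have := hvb; linarith
          exact mul_le_mul hA hB (by positivity) (by positivity)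
  have hba : |b - a| = ℓ := by rw [abs_of_pos]; exact hℓpos
  calc ‖∫ x in a..b, ((s x - s c) ^ 2 - (x - c) ^ 2 * (deriv s c) ^ 2)‖
      ≤ C * |b - a| := hbound
    _ = C * ℓ := by rw [hba]
    _ ≤ 1 * ℓ ^ 4 * M₂ * (M₁ + M₂) := by
        rw [hC]
        have h5 : ℓ ^ 5 ≤ ℓ ^ 4 := pow_le_pow_of_le_one hℓpos.le hℓ1 (by norm_num)
        have heq : M₂ * (ℓ/2) ^ 2 * (M₂ * (ℓ/2) ^ 2 + 2 * M₁ * (ℓ/2)) * ℓ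
            = M₂ * M₂ * ℓ ^ 5 / 16 + M₁ * M₂ * ℓ ^ 4 / 4 := by ring
        have heq2 : 1 * ℓ ^ 4 * M₂ * (M₁ + M₂) = M₁ * M₂ * ℓ ^ 4 + M₂ * M₂ * ℓ ^ 4 := by
          ring
        rw [heq, heq2]
        clear_value ℓ
        have f1 : M₂ * M₂ * ℓ ^ 5 ≤ M₂ * M₂ * ℓ ^ 4 :=
          mul_le_mul_of_nonneg_left h5 (mul_nonneg hM₂ hM₂)
        have f2 : 0 ≤ M₁ * M₂ * ℓ ^ 4 :=
          mul_nonneg (mul_nonneg hM₁ hM₂) (pow_nonneg hℓpos.le 4)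
        have f3 : 0 ≤ M₂ * M₂ * ℓ ^ 4 :=
          mul_nonneg (mul_nonneg hM₂ hM₂) (pow_nonneg hℓpos.le 4)
        linarith
end

section
/- Let s : [0,1] → ℝ be twice continuously differentiable, I = [a,b] ⊆ [0,1] an interval with length ℓ, and s_I its mean value on I. Then |∫_I (s(x) − s_I)² dx − (ℓ²/12)·∫_I s'(x)² dx| ≤ L·ℓ⁴·‖s''‖_∞·(‖s'‖_∞ + ‖s''‖_∞) for some absolute constant L. -/
set_option maxHeartbeats 1000000

/-- There is an absolute constant `L` such that: if `s` is C² with `|s'| ≤ M₁`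
and `|s''| ≤ M₂` on `[0,1]`, `I = [a,b] ⊆ [0,1]` has length `ℓ`, and `s_I`
is the mean of `s` on `I`, then
`|∫_I (s − s_I)² − (ℓ²/12)·∫_I s'(x)² dx| ≤ L·ℓ⁴·M₂·(M₁+M₂)`. -/
theorem stmt_7 :
    ∃ L : ℝ, 0 < L ∧
      ∀ (s : ℝ → ℝ), ContDiff ℝ 2 s →
      ∀ (M₁ M₂ : ℝ),
        (∀ x ∈ Set.Icc (0:ℝ) 1, |deriv s x| ≤ M₁) →
        (∀ x ∈ Set.Icc (0:ℝ) 1, |deriv (deriv s) x| ≤ M₂) →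
      ∀ (a b : ℝ), 0 ≤ a → a < b → b ≤ 1 →
        |(∫ x in a..b, (s x - (b - a)⁻¹ * ∫ t in a..b, s t) ^ 2)
            - (b - a) ^ 2 / 12 * ∫ x in a..b, (deriv s x) ^ 2|
          ≤ L * (b - a) ^ 4 * M₂ * (M₁ + M₂) := by
  refine ⟨7, by norm_num, ?_⟩
  intro s hC M₁ M₂ hM₁ hM₂ a b ha hab hb
  set ℓ : ℝ := b - a with hℓdef
  have hℓ : 0 < ℓ := sub_pos.2 hab
  have hℓ1 : ℓ ≤ 1 := by rw [hℓdef]; linarith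
  have hsub : Set.Icc a b ⊆ Set.Icc (0:ℝ) 1 := Set.Icc_subset_Icc ha hb
  set c : ℝ := (a + b) / 2 with hcdef
  have hcI : c ∈ Set.Icc a b := ⟨by rw [hcdef]; linarith, by rw [hcdef]; linarith⟩
  have hM₁0 : 0 ≤ M₁ := le_trans (abs_nonneg _) (hM₁ 0 ⟨le_refl _, zero_le_one⟩)
  have hM₂0 : 0 ≤ M₂ := le_trans (abs_nonneg _) (hM₂ 0 ⟨le_refl _, zero_le_one⟩)
  have hds : Differentiable ℝ s := hC.differentiable (by norm_num)
  have hC1 : ContDiff ℝ 1 (deriv s) := by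
    have h : ContDiff ℝ (1 + 1) s := by norm_num at hC ⊢; exact hC
    exact (contDiff_succ_iff_deriv.mp h).2.2
  have hdds : Differentiable ℝ (deriv s) := hC1.differentiable one_ne_zero
  set A : ℝ := deriv s c with hAdef
  have hA : |A| ≤ M₁ := hM₁ c (hsub hcI)
  -- distance bound inside the interval
  have hdist : ∀ x ∈ Set.Icc a b, |x - c| ≤ ℓ := by
    intro x hx
    rw [abs_sub_le_iff]
    exact ⟨by rw [hℓdef]; linarith [hx.1, hx.2, hcI.1, hcI.2],
           by rw [hℓdef]; linarith [hx.1, hx.2, hcI.1, hcI.2]⟩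
  -- first Taylor bound: |s' - A| ≤ M₂ ℓ on [a,b]
  have hB1 : ∀ x ∈ Set.Icc a b, |deriv s x - A| ≤ M₂ * ℓ := by
    intro x hx
    have h := (convex_Icc (0:ℝ) 1).norm_image_sub_le_of_norm_deriv_le
      (fun y _ => hdds y) (fun y hy => hM₂ y hy) (hsub hcI) (hsub hx)
    simp only [Real.norm_eq_abs] at h
    calc |deriv s x - A| ≤ M₂ * |x - c| := h
      _ ≤ M₂ * ℓ := mul_le_mul_of_nonneg_left (hdist x hx) hM₂0
  -- the second-order remainder g
  set g : ℝ → ℝ := fun x => s x - s c - A * (x - c) with hgdef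
  have hgx : ∀ x, g x = s x - s c - A * (x - c) := fun x => rfl
  have hgd : ∀ x, HasDerivAt g (deriv s x - A) x := by
    intro x
    have h1 : HasDerivAt (fun y : ℝ => A * (y - c)) A x := by
      simpa using (((hasDerivAt_id x).sub_const c).const_mul A)
    exact (((hds x).hasDerivAt.sub_const (s c)).sub h1)
  have hgdiff : ∀ y, DifferentiableAt ℝ g y := fun y => (hgd y).differentiableAt
  have hgderiv : ∀ x, deriv g x = deriv s x - A := fun x => (hgd x).deriv
  have hgc : g c = 0 := by rw [hgx]; ring
  have hB2 : ∀ x ∈ Set.Icc a b, |g x| ≤ M₂ * ℓ * ℓ := by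
    intro x hx
    have h := (convex_Icc a b).norm_image_sub_le_of_norm_deriv_le
      (fun y _ => hgdiff y)
      (fun y hy => by rw [Real.norm_eq_abs, hgderiv]; exact hB1 y hy) hcI hx
    rw [hgc, sub_zero, Real.norm_eq_abs, Real.norm_eq_abs] at h
    calc |g x| ≤ M₂ * ℓ * |x - c| := h
      _ ≤ M₂ * ℓ * ℓ := mul_le_mul_of_nonneg_left (hdist x hx) (by positivity)
  -- continuity / integrability
  have hcs : Continuous s := hC.continuous
  have hcd : Continuous (deriv s) := hC1.continuous
  have hcg : Continuous g := by
    rw [hgdef]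
    exact (hcs.sub continuous_const).sub (continuous_const.mul (continuous_id.sub continuous_const))
  have hcxc : Continuous fun x : ℝ => x - c := continuous_id.sub continuous_const
  -- basic integrals
  have Ic0 : (∫ x in a..b, (x - c)) = 0 := by
    rw [intervalIntegral.integral_comp_sub_right (fun x => x) c, integral_id, hcdef]
    ring
  have Ic2 : (∫ x in a..b, (x - c) ^ 2) = ℓ ^ 3 / 12 := by
    rw [intervalIntegral.integral_comp_sub_right (fun x => x ^ 2) c, integral_pow]
    rw [hcdef, hℓdef]; norm_num; ring
  -- mean value of s
  set G : ℝ := ∫ x in a..b, g x with hGdef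
  have hGeq : G = (∫ t in a..b, s t) - s c * ℓ := by
    rw [hGdef]
    calc (∫ x in a..b, g x) = ∫ x in a..b, (s x - s c - A * (x - c)) := by
          apply intervalIntegral.integral_congr; intro x _; rw [hgx]
      _ = (∫ x in a..b, (s x - s c)) - ∫ x in a..b, A * (x - c) := by
          apply intervalIntegral.integral_sub
          · exact ((hcs.sub continuous_const).intervalIntegrable a b)
          · exact ((continuous_const.mul hcxc).intervalIntegrable a b)
      _ = ((∫ x in a..b, s x) - ∫ x in a..b, (s c : ℝ)) - A * ∫ x in a..b, (x - c) := by
          rw [intervalIntegral.integral_sub (hcs.intervalIntegrable a b)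
            (intervalIntegrable_const), intervalIntegral.integral_const_mul]
      _ = (∫ t in a..b, s t) - s c * ℓ := by
          rw [Ic0, intervalIntegral.integral_const, smul_eq_mul, ← hℓdef]; ring
  set gbar : ℝ := ℓ⁻¹ * G with hgbardef
  have hm : ℓ⁻¹ * (∫ t in a..b, s t) = s c + gbar := by
    rw [hgbardef, hGeq]; field_simp; ring
  -- bound on G and gbar
  have hIoc : Set.uIoc a b ⊆ Set.Icc a b := by
    rw [Set.uIoc_of_le hab.le]; exact Set.Ioc_subset_Icc_self
  have hGb : |G| ≤ M₂ * ℓ * ℓ * ℓ := by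
    have h := intervalIntegral.norm_integral_le_of_norm_le_const
      (C := M₂ * ℓ * ℓ) (f := g) (a := a) (b := b)
      (fun x hx => by rw [Real.norm_eq_abs]; exact hB2 x (hIoc hx))
    rw [Real.norm_eq_abs, ← hℓdef, abs_of_pos hℓ] at h
    exact h
  have hgbarb : |gbar| ≤ M₂ * ℓ * ℓ := by
    rw [hgbardef, abs_mul, abs_inv, abs_of_pos hℓ]
    calc ℓ⁻¹ * |G| ≤ ℓ⁻¹ * (M₂ * ℓ * ℓ * ℓ) :=
          mul_le_mul_of_nonneg_left hGb (by positivity)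
      _ = M₂ * ℓ * ℓ := by field_simp
  -- the four auxiliary integrals
  set J : ℝ := ∫ x in a..b, (x - c) * g x with hJdef
  set K : ℝ := ∫ x in a..b, (g x - gbar) ^ 2 with hKdef
  set E : ℝ := ∫ x in a..b, (deriv s x - A) with hEdef
  set F : ℝ := ∫ x in a..b, (deriv s x - A) ^ 2 with hFdef
  -- identity for P
  have hP : (∫ x in a..b, (s x - ℓ⁻¹ * ∫ t in a..b, s t) ^ 2)
      = A ^ 2 * (ℓ ^ 3 / 12) + 2 * A * J + K := by
    have step1 : (∫ x in a..b, (s x - ℓ⁻¹ * ∫ t in a..b, s t) ^ 2)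
        = ∫ x in a..b, (A ^ 2 * (x - c) ^ 2 + 2 * A * ((x - c) * g x)
            + (-(2 * A * gbar)) * (x - c) + (g x - gbar) ^ 2) := by
      apply intervalIntegral.integral_congr
      intro x _
      simp only [hm, hgx]
      ring
    rw [step1]
    have i1 : IntervalIntegrable (fun x => A ^ 2 * (x - c) ^ 2) MeasureTheory.volume a b :=
      (continuous_const.mul (hcxc.pow 2)).intervalIntegrable a b
    have i2 : IntervalIntegrable (fun x => 2 * A * ((x - c) * g x)) MeasureTheory.volume a b :=
      (continuous_const.mul (hcxc.mul hcg)).intervalIntegrable a b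
    have i3 : IntervalIntegrable (fun x => (-(2 * A * gbar)) * (x - c)) MeasureTheory.volume a b :=
      (continuous_const.mul hcxc).intervalIntegrable a b
    have i4 : IntervalIntegrable (fun x => (g x - gbar) ^ 2) MeasureTheory.volume a b :=
      ((hcg.sub continuous_const).pow 2).intervalIntegrable a b
    rw [intervalIntegral.integral_add ((i1.add i2).add i3) i4,
        intervalIntegral.integral_add (i1.add i2) i3,
        intervalIntegral.integral_add i1 i2,
        intervalIntegral.integral_const_mul, intervalIntegral.integral_const_mul,
        intervalIntegral.integral_const_mul, Ic0, Ic2, ← hJdef, ← hKdef]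
    ring
  -- identity for Q
  have hQ : (∫ x in a..b, (deriv s x) ^ 2) = A ^ 2 * ℓ + 2 * A * E + F := by
    have step1 : (∫ x in a..b, (deriv s x) ^ 2)
        = ∫ x in a..b, ((A ^ 2 : ℝ) + 2 * A * (deriv s x - A) + (deriv s x - A) ^ 2) := by
      apply intervalIntegral.integral_congr
      intro x _
      ring
    rw [step1]
    have i1 : IntervalIntegrable (fun _ : ℝ => (A ^ 2 : ℝ)) MeasureTheory.volume a b :=
      intervalIntegrable_const
    have i2 : IntervalIntegrable (fun x => 2 * A * (deriv s x - A)) MeasureTheory.volume a b :=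
      (continuous_const.mul (hcd.sub continuous_const)).intervalIntegrable a b
    have i3 : IntervalIntegrable (fun x => (deriv s x - A) ^ 2) MeasureTheory.volume a b :=
      ((hcd.sub continuous_const).pow 2).intervalIntegrable a b
    rw [intervalIntegral.integral_add (i1.add i2) i3, intervalIntegral.integral_add i1 i2,
        intervalIntegral.integral_const_mul, intervalIntegral.integral_const,
        smul_eq_mul, ← hℓdef, ← hEdef, ← hFdef]
    ring
  -- bounds on J, K, E, F
  have hJb : |J| ≤ M₂ * ℓ ^ 3 * ℓ := by
    have h := intervalIntegral.norm_integral_le_of_norm_le_const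
      (C := M₂ * ℓ ^ 3) (f := fun x => (x - c) * g x) (a := a) (b := b) ?_
    · rw [Real.norm_eq_abs, ← hℓdef, abs_of_pos hℓ] at h; exact h
    · intro x hx
      have hx' := hIoc hx
      rw [Real.norm_eq_abs, abs_mul]
      calc |x - c| * |g x| ≤ ℓ * (M₂ * ℓ * ℓ) :=
            mul_le_mul (hdist x hx') (hB2 x hx') (abs_nonneg _) hℓ.le
        _ = M₂ * ℓ ^ 3 := by ring
  have hKb : |K| ≤ 4 * (M₂ * ℓ * ℓ) ^ 2 * ℓ := by
    have h := intervalIntegral.norm_integral_le_of_norm_le_const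
      (C := 4 * (M₂ * ℓ * ℓ) ^ 2) (f := fun x => (g x - gbar) ^ 2) (a := a) (b := b) ?_
    · rw [Real.norm_eq_abs, ← hℓdef, abs_of_pos hℓ] at h; exact h
    · intro x hx
      have hx' := hIoc hx
      have h1 : |g x - gbar| ≤ 2 * (M₂ * ℓ * ℓ) := by
        calc |g x - gbar| ≤ |g x| + |gbar| := abs_sub _ _
          _ ≤ M₂ * ℓ * ℓ + M₂ * ℓ * ℓ := add_le_add (hB2 x hx') hgbarb
          _ = 2 * (M₂ * ℓ * ℓ) := by ring
      rw [Real.norm_eq_abs, abs_pow]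
      calc |g x - gbar| ^ 2 ≤ (2 * (M₂ * ℓ * ℓ)) ^ 2 :=
            pow_le_pow_left₀ (abs_nonneg _) h1 2
        _ = 4 * (M₂ * ℓ * ℓ) ^ 2 := by ring
  have hEb : |E| ≤ M₂ * ℓ * ℓ := by
    have h := intervalIntegral.norm_integral_le_of_norm_le_const
      (C := M₂ * ℓ) (f := fun x => deriv s x - A) (a := a) (b := b)
      (fun x hx => by rw [Real.norm_eq_abs]; exact hB1 x (hIoc hx))
    rw [Real.norm_eq_abs, ← hℓdef, abs_of_pos hℓ] at h; exact h
  have hFb : |F| ≤ (M₂ * ℓ) ^ 2 * ℓ := by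
    have h := intervalIntegral.norm_integral_le_of_norm_le_const
      (C := (M₂ * ℓ) ^ 2) (f := fun x => (deriv s x - A) ^ 2) (a := a) (b := b) ?_
    · rw [Real.norm_eq_abs, ← hℓdef, abs_of_pos hℓ] at h; exact h
    · intro x hx
      rw [Real.norm_eq_abs, abs_pow]
      exact pow_le_pow_left₀ (abs_nonneg _) (hB1 x (hIoc hx)) 2
  -- put everything together
  rw [hP, hQ]
  have heq : (A ^ 2 * (ℓ ^ 3 / 12) + 2 * A * J + K) - ℓ ^ 2 / 12 * (A ^ 2 * ℓ + 2 * A * E + F)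
      = 2 * A * J + K - ℓ ^ 2 / 12 * (2 * A * E + F) := by ring
  rw [heq]
  clear_value ℓ c A g G gbar J K E F
  have habs : |2 * A * J + K - ℓ ^ 2 / 12 * (2 * A * E + F)|
      ≤ 2 * (|A| * |J|) + |K| + ℓ ^ 2 / 12 * (2 * (|A| * |E|) + |F|) := by
    calc |2 * A * J + K - ℓ ^ 2 / 12 * (2 * A * E + F)|
        ≤ |2 * A * J + K| + |ℓ ^ 2 / 12 * (2 * A * E + F)| := abs_sub _ _
      _ ≤ (|2 * A * J| + |K|) + |ℓ ^ 2 / 12 * (2 * A * E + F)| :=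
          add_le_add_left (abs_add_le _ _) _
      _ ≤ (|2 * A * J| + |K|) + ℓ ^ 2 / 12 * (|2 * A * E| + |F|) := by
          apply add_le_add_right
          rw [abs_mul, abs_of_nonneg (by positivity : (0:ℝ) ≤ ℓ ^ 2 / 12)]
          exact mul_le_mul_of_nonneg_left (abs_add_le _ _) (by positivity)
      _ = 2 * (|A| * |J|) + |K| + ℓ ^ 2 / 12 * (2 * (|A| * |E|) + |F|) := by
          rw [abs_mul, abs_mul, abs_mul, abs_mul, abs_two]; ring
  refine habs.trans ?_
  have haJ : |A| * |J| ≤ M₁ * M₂ * ℓ ^ 4 :=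
    le_trans (mul_le_mul hA hJb (abs_nonneg _) hM₁0) (le_of_eq (by ring))
  have haE : |A| * |E| ≤ M₁ * M₂ * ℓ ^ 2 :=
    le_trans (mul_le_mul hA hEb (abs_nonneg _) hM₁0) (le_of_eq (by ring))
  have hFb' : |F| ≤ M₂ ^ 2 * ℓ ^ 3 := le_trans hFb (le_of_eq (by ring))
  have hℓ4 : (0:ℝ) ≤ ℓ ^ 4 := by positivity
  have hℓ54 : ℓ ^ 5 ≤ ℓ ^ 4 := by nlinarith [pow_nonneg hℓ.le 4]
  have hK' : |K| ≤ 4 * M₂ ^ 2 * ℓ ^ 4 := by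
    refine le_trans hKb ?_
    have e1 : 4 * (M₂ * ℓ * ℓ) ^ 2 * ℓ = 4 * M₂ ^ 2 * ℓ ^ 5 := by ring
    have e2 := mul_le_mul_of_nonneg_left hℓ54 (by positivity : (0:ℝ) ≤ 4 * M₂ ^ 2)
    linarith
  have htail : ℓ ^ 2 / 12 * (2 * (|A| * |E|) + |F|)
      ≤ M₁ * M₂ * ℓ ^ 4 + M₂ ^ 2 * ℓ ^ 4 := by
    have h1 : ℓ ^ 2 / 12 * (2 * (|A| * |E|) + |F|)
        ≤ ℓ ^ 2 / 12 * (2 * (M₁ * M₂ * ℓ ^ 2) + M₂ ^ 2 * ℓ ^ 3) := by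
      apply mul_le_mul_of_nonneg_left _ (by positivity : (0:ℝ) ≤ ℓ ^ 2 / 12)
      linarith
    have e1 : ℓ ^ 2 / 12 * (2 * (M₁ * M₂ * ℓ ^ 2) + M₂ ^ 2 * ℓ ^ 3)
        = M₁ * M₂ * ℓ ^ 4 / 6 + M₂ ^ 2 * ℓ ^ 5 / 12 := by ring
    have e2 : M₂ ^ 2 * ℓ ^ 5 ≤ M₂ ^ 2 * ℓ ^ 4 :=
      mul_le_mul_of_nonneg_left hℓ54 (sq_nonneg M₂)
    have e3 : 0 ≤ M₁ * M₂ * ℓ ^ 4 := by positivity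
    have e4 : (0:ℝ) ≤ M₂ ^ 2 * ℓ ^ 4 := by positivity
    linarith
  have final : 3 * (M₁ * M₂ * ℓ ^ 4) + 5 * (M₂ ^ 2 * ℓ ^ 4) ≤ 7 * ℓ ^ 4 * M₂ * (M₁ + M₂) := by
    nlinarith [mul_nonneg (mul_nonneg hM₁0 hM₂0) hℓ4, mul_nonneg (sq_nonneg M₂ : (0:ℝ) ≤ M₂^2) hℓ4]
  linarith
end

section
/- Let s : [0,1] → ℝ be twice continuously differentiable. For positive integers D₁, D₂, consider the partition of [0,1] consisting of D₁ equal subintervals of [0,1/2] and D₂ equal subintervals of (1/2,1], and let s_m be the piecewise-constant function equal to the mean of s on each subinterval. Set α₁ = (1/48)∫₀^{1/2} s'(x)² dx and α₂ = (1/48)∫_{1/2}^1 s'(x)² dx. Then |∫₀¹ (s(x) − s_m(x))² dx − α₁/D₁² − α₂/D₂²| ≤ C·(D₁⁻³ + D₂⁻³), where C depends only on ‖s'‖_∞ and ‖s''‖_∞. -/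
open MeasureTheory Set intervalIntegral

namespace Stmt8Aux

lemma expand_sq (f : ℝ → ℝ) (hf : Continuous f) (a b c : ℝ) :
    ∫ x in a..b, (f x - c)^2
      = (∫ x in a..b, (f x)^2) - 2*c*(∫ x in a..b, f x) + c^2*(b-a) := by
  have h1 : IntervalIntegrable (fun x => (f x)^2) volume a b :=
    (hf.pow 2).intervalIntegrable a b
  have h2 : IntervalIntegrable (fun x => 2*c*f x) volume a b :=
    (continuous_const.mul hf).intervalIntegrable a b
  have h3 : IntervalIntegrable (fun x => (f x)^2 - 2*c*f x) volume a b := h1.sub h2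
  have e : ∀ x:ℝ, (f x - c)^2 = ((f x)^2 - 2*c*f x) + c^2 := by intro x; ring
  simp_rw [e]
  rw [intervalIntegral.integral_add h3 intervalIntegrable_const,
    intervalIntegral.integral_sub h1 h2, intervalIntegral.integral_const_mul,
    intervalIntegral.integral_const]
  simp [smul_eq_mul]; ring

lemma var_le (f : ℝ → ℝ) (hf : Continuous f) (a b c μ : ℝ) (hab : a < b)
    (hμ : (∫ t in a..b, f t) = μ * (b-a)) :
    ∫ x in a..b, (f x - μ)^2 ≤ ∫ x in a..b, (f x - c)^2 := by
  rw [expand_sq f hf a b c, expand_sq f hf a b μ, hμ]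
  nlinarith [mul_nonneg (by linarith : (0:ℝ) ≤ b - a) (sq_nonneg (c - μ))]

lemma bin_est (s : ℝ → ℝ) (hs : ContDiff ℝ 2 s) (M₁ M₂ : ℝ)
    (hM₁ : ∀ x ∈ Icc (0:ℝ) 1, |deriv s x| ≤ M₁)
    (hM₂ : ∀ x ∈ Icc (0:ℝ) 1, |deriv (deriv s) x| ≤ M₂)
    (a h : ℝ) (ha : 0 ≤ a) (hh : 0 < h) (hh1 : h ≤ 1) (hab : a + h ≤ 1) :
    |(∫ x in a..a+h, (s x - h⁻¹ * ∫ t in a..a+h, s t)^2)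
       - h^2/12 * ∫ x in a..a+h, (deriv s x)^2| ≤ (4*M₂^2 + 5*M₁*M₂) * h^4 := by
  -- regularity
  have h2 : ContDiff ℝ (1+1) s := by
    rw [show ((1:WithTop ℕ∞)+1) = 2 by norm_num]; exact hs
  have hsd : Differentiable ℝ s := hs.differentiable (by norm_num)
  have hs1 : ContDiff ℝ 1 (deriv s) := (contDiff_succ_iff_deriv.mp h2).2.2
  have hs'd : Differentiable ℝ (deriv s) := hs1.differentiable (by norm_num)
  have hsc : Continuous s := hsd.continuous
  have hs'c : Continuous (deriv s) := hs'd.continuous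
  have hM₁0 : 0 ≤ M₁ := (abs_nonneg _).trans (hM₁ 0 ⟨le_rfl, zero_le_one⟩)
  have hM₂0 : 0 ≤ M₂ := (abs_nonneg _).trans (hM₂ 0 ⟨le_rfl, zero_le_one⟩)
  have hsub : Icc a (a+h) ⊆ Icc 0 1 := Icc_subset_Icc ha hab
  have hlt : a < a + h := by linarith
  -- Lipschitz bound for deriv s
  have hLip : ∀ x ∈ Icc a (a+h), |deriv s x - deriv s a| ≤ M₂ * (x - a) := by
    intro x hx
    have := norm_image_sub_le_of_norm_deriv_le_segment'
      (f := deriv s) (f' := deriv (deriv s)) (C := M₂) (a := a) (b := a+h)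
      (fun y _ => (hs'd y).hasDerivAt.hasDerivWithinAt)
      (fun y hy => by
        rw [Real.norm_eq_abs]; exact hM₂ y (hsub (Ico_subset_Icc_self hy))) x hx
    rwa [Real.norm_eq_abs] at this
  have hLiph : ∀ x ∈ Icc a (a+h), |deriv s x - deriv s a| ≤ M₂ * h := by
    intro x hx
    refine (hLip x hx).trans (mul_le_mul_of_nonneg_left ?_ hM₂0)
    have := hx.2; linarith
  set L := deriv s a with hL
  set ℓ : ℝ → ℝ := fun x => s a + L*(x-a) with hℓdef
  have hℓc : Continuous ℓ := by
    apply continuous_const.add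
    exact continuous_const.mul (continuous_id.sub continuous_const)
  -- Taylor estimate
  have hTay : ∀ x ∈ Icc a (a+h), |s x - ℓ x| ≤ M₂ * h^2 := by
    intro x hx
    have hg : ∀ y ∈ Icc a (a+h),
        HasDerivWithinAt (fun t => s t - ℓ t) (deriv s y - L) (Icc a (a+h)) y := by
      intro y _
      have h1 : HasDerivAt (fun t => s t - ℓ t) (deriv s y - L) y := by
        have hℓ' : HasDerivAt ℓ L y := by
          have : HasDerivAt (fun t : ℝ => L*(t-a)) (L*1) y :=
            ((hasDerivAt_id y).sub_const a).const_mul L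
          simpa [hℓdef] using this.const_add (s a)
        exact ((hsd y).hasDerivAt.sub hℓ')
      exact h1.hasDerivWithinAt
    have := norm_image_sub_le_of_norm_deriv_le_segment' hg
      (C := M₂ * h)
      (fun y hy => by
        rw [Real.norm_eq_abs]; exact hLiph y (Ico_subset_Icc_self hy)) x hx
    rw [Real.norm_eq_abs] at this
    have hga : s a - ℓ a = 0 := by simp [hℓdef]
    rw [hga, sub_zero] at this
    refine this.trans ?_
    have hx2 : x - a ≤ h := by have := hx.2; linarith
    have : M₂ * h * (x - a) ≤ M₂ * h * h :=
      mul_le_mul_of_nonneg_left hx2 (by positivity)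
    nlinarith
  -- linear integral computation
  have hint_lin : ∀ c d : ℝ, (∫ t in a..a+h, (c + d*(t-a))) = c*h + d*h^2/2 := by
    intro c d
    have e : (∫ t in a..a+h, (c + d*(t-a))) = ∫ t in a..a+h, (fun u => c + d*u) (t - a) := rfl
    rw [e, intervalIntegral.integral_comp_sub_right (fun u => c + d*u) a,
      show a - a = (0:ℝ) by ring, show a + h - a = h by ring]
    rw [intervalIntegral.integral_add (g := fun x : ℝ => d * x) intervalIntegrable_const
      ((continuous_const.mul continuous_id').intervalIntegrable _ _),
      intervalIntegral.integral_const_mul, integral_id, intervalIntegral.integral_const]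
    simp [smul_eq_mul]; ring
  have hquad : (∫ x in a..a+h, (x - (a + h/2))^2) = h^3/12 := by
    have e : (∫ x in a..a+h, (x - (a+h/2))^2)
        = ∫ x in a..a+h, (fun u => u^2) (x - (a+h/2)) := rfl
    rw [e, intervalIntegral.integral_comp_sub_right (fun u => u^2) (a+h/2),
      show a - (a+h/2) = -(h/2) by ring, show a + h - (a+h/2) = h/2 by ring,
      integral_pow]
    norm_num; ring
  set μ := h⁻¹ * ∫ t in a..a+h, s t with hμdef
  set μℓ := s a + L*(h/2) with hμℓdef
  have hμs : (∫ t in a..a+h, s t) = μ * (a + h - a) := by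
    rw [hμdef]; field_simp; ring
  have hμℓint : (∫ t in a..a+h, ℓ t) = μℓ * (a + h - a) := by
    rw [show (∫ t in a..a+h, ℓ t) = ∫ t in a..a+h, (s a + L*(t-a)) from rfl, hint_lin,
      hμℓdef]; ring
  have hEℓ : (∫ x in a..a+h, (ℓ x - μℓ)^2) = L^2 * h^3/12 := by
    have e : ∀ x:ℝ, (ℓ x - μℓ)^2 = L^2 * (x - (a+h/2))^2 := by
      intro x; simp only [hℓdef, hμℓdef]; ring
    simp_rw [e]
    rw [intervalIntegral.integral_const_mul, hquad]; ring
  -- pointwise bounds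
  have hLa : |L| ≤ M₁ := hM₁ a (hsub ⟨le_rfl, by linarith⟩)
  have hb2 : ∀ x ∈ Icc a (a+h), |ℓ x - μℓ| ≤ M₁ * h := by
    intro x hx
    have e : ℓ x - μℓ = L * (x - a - h/2) := by simp only [hℓdef, hμℓdef]; ring
    rw [e, abs_mul]
    have : |x - a - h/2| ≤ h := by
      rw [abs_le]; constructor <;> [skip; skip] <;> (have := hx.1; have := hx.2; linarith)
    exact mul_le_mul hLa this (abs_nonneg _) hM₁0
  -- |μ - μℓ| ≤ M₂ h²
  have hμdiff : |μ - μℓ| ≤ M₂ * h^2 := by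
    have hsl : IntervalIntegrable (fun x => s x - ℓ x) volume a (a+h) :=
      (hsc.sub hℓc).intervalIntegrable _ _
    have hi : (∫ x in a..a+h, (s x - ℓ x))
        = (∫ x in a..a+h, s x) - ∫ x in a..a+h, ℓ x :=
      intervalIntegral.integral_sub (hsc.intervalIntegrable _ _) (hℓc.intervalIntegrable _ _)
    have hbd := intervalIntegral.norm_integral_le_of_norm_le_const
      (a := a) (b := a+h) (C := M₂*h^2) (f := fun x => s x - ℓ x)
      (fun x hx => by
        rw [Real.norm_eq_abs]
        exact hTay x (Ioc_subset_Icc_self (by rwa [uIoc_of_le hlt.le] at hx)))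
    rw [Real.norm_eq_abs, hi, show a + h - a = h by ring, abs_of_pos hh] at hbd
    have e : μ - μℓ = h⁻¹ * ((∫ x in a..a+h, s x) - ∫ x in a..a+h, ℓ x) := by
      rw [hμdef]
      have : (∫ x in a..a+h, ℓ x) = μℓ * h := by rw [hμℓint]; ring
      rw [this]; field_simp
    rw [e, abs_mul, abs_inv, abs_of_pos hh]
    rw [inv_mul_le_iff₀ hh]
    calc |(∫ x in a..a+h, s x) - ∫ x in a..a+h, ℓ x| ≤ M₂*h^2*h := hbd
      _ = h * (M₂*h^2) := by ring
  -- generic integral-difference bound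
  have key : ∀ (F G : ℝ → ℝ), Continuous F → Continuous G → ∀ B : ℝ,
      (∀ x ∈ Icc a (a+h), |F x - G x| ≤ B) →
      |(∫ x in a..a+h, F x) - ∫ x in a..a+h, G x| ≤ B * h := by
    intro F G hF hG B hB
    rw [← intervalIntegral.integral_sub (hF.intervalIntegrable _ _) (hG.intervalIntegrable _ _)]
    have hbd := intervalIntegral.norm_integral_le_of_norm_le_const (a := a) (b := a+h)
      (C := B) (f := fun x => F x - G x)
      (fun x hx => by
        rw [Real.norm_eq_abs]
        exact hB x (Ioc_subset_Icc_self (by rwa [uIoc_of_le hlt.le] at hx)))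
    rw [Real.norm_eq_abs, show a + h - a = h by ring, abs_of_pos hh] at hbd
    exact hbd
  have habsμ : |μℓ - μ| ≤ M₂*h^2 := by rwa [abs_sub_comm] at hμdiff
  have hsμ : ∀ x ∈ Icc a (a+h), |s x - μ| ≤ M₂*h^2 + M₁*h + M₂*h^2 := by
    intro x hx
    have h1 := hTay x hx
    have h2 := hb2 x hx
    have e : s x - μ = (s x - ℓ x) + (ℓ x - μℓ) + (μℓ - μ) := by ring
    rw [e]
    calc |(s x - ℓ x) + (ℓ x - μℓ) + (μℓ - μ)|
        ≤ |s x - ℓ x| + |ℓ x - μℓ| + |μℓ - μ| := abs_add_three _ _ _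
      _ ≤ M₂*h^2 + M₁*h + M₂*h^2 := by linarith
  have hℓμ : ∀ x ∈ Icc a (a+h), |ℓ x - μ| ≤ M₁*h + M₂*h^2 := by
    intro x hx
    have h2 := hb2 x hx
    have e : ℓ x - μ = (ℓ x - μℓ) + (μℓ - μ) := by ring
    rw [e]
    calc |(ℓ x - μℓ) + (μℓ - μ)| ≤ |ℓ x - μℓ| + |μℓ - μ| := abs_add_le _ _
      _ ≤ M₁*h + M₂*h^2 := by linarith
  -- comparison integrals
  have hU1 : (∫ x in a..a+h, (s x - μ)^2) ≤ ∫ x in a..a+h, (s x - μℓ)^2 :=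
    var_le s hsc a (a+h) μℓ μ hlt hμs
  have hL1 : (∫ x in a..a+h, (ℓ x - μℓ)^2) ≤ ∫ x in a..a+h, (ℓ x - μ)^2 :=
    var_le ℓ hℓc a (a+h) μ μℓ hlt hμℓint
  have hU2 : |(∫ x in a..a+h, (s x - μℓ)^2) - ∫ x in a..a+h, (ℓ x - μℓ)^2|
      ≤ (M₂*h^2*(M₂*h^2 + 2*(M₁*h))) * h := by
    apply key (fun x => (s x - μℓ)^2) (fun x => (ℓ x - μℓ)^2) ((hsc.sub continuous_const).pow 2) ((hℓc.sub continuous_const).pow 2)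
    intro x hx
    have h1 := hTay x hx
    have h2 := hb2 x hx
    have e : (s x - μℓ)^2 - (ℓ x - μℓ)^2 = (s x - ℓ x) * ((s x - ℓ x) + 2*(ℓ x - μℓ)) := by
      ring
    rw [e, abs_mul]
    have t1 : |(s x - ℓ x) + 2*(ℓ x - μℓ)| ≤ |s x - ℓ x| + |2*(ℓ x - μℓ)| := abs_add_le _ _
    rw [abs_mul, abs_two] at t1
    exact mul_le_mul h1 (t1.trans (by linarith)) (abs_nonneg _) (by positivity)
  have hL2 : |(∫ x in a..a+h, (ℓ x - μ)^2) - ∫ x in a..a+h, (s x - μ)^2|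
      ≤ (M₂*h^2*(2*M₁*h + 3*M₂*h^2)) * h := by
    apply key (fun x => (ℓ x - μ)^2) (fun x => (s x - μ)^2) ((hℓc.sub continuous_const).pow 2) ((hsc.sub continuous_const).pow 2)
    intro x hx
    have h1 := hTay x hx
    have h2 := hℓμ x hx
    have h3 := hsμ x hx
    have e : (ℓ x - μ)^2 - (s x - μ)^2 = (ℓ x - s x) * ((ℓ x - μ) + (s x - μ)) := by ring
    rw [e, abs_mul, abs_sub_comm (ℓ x) (s x)]
    have t1 : |(ℓ x - μ) + (s x - μ)| ≤ |ℓ x - μ| + |s x - μ| := abs_add_le _ _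
    exact mul_le_mul h1 (t1.trans (by linarith)) (abs_nonneg _) (by positivity)
  -- Riemann sum estimate
  have hconst : (∫ x in a..a+h, L^2) = h * L^2 := by
    rw [intervalIntegral.integral_const, smul_eq_mul]; ring
  have hR : |(∫ x in a..a+h, (deriv s x)^2) - ∫ x in a..a+h, L^2|
      ≤ (2*M₁*(M₂*h)) * h := by
    apply key (fun x => (deriv s x)^2) (fun _ => L^2) (hs'c.pow 2) continuous_const
    intro x hx
    have h1 := hLiph x hx
    have h2 : |deriv s x + L| ≤ 2*M₁ := by
      have t1 : |deriv s x + L| ≤ |deriv s x| + |L| := abs_add_le _ _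
      have t2 := hM₁ x (hsub hx)
      linarith
    have e : (deriv s x)^2 - L^2 = (deriv s x - L)*(deriv s x + L) := by ring
    rw [e, abs_mul]
    calc |deriv s x - L| * |deriv s x + L| ≤ (M₂*h)*(2*M₁) :=
          mul_le_mul h1 h2 (abs_nonneg _) (by positivity)
      _ = 2*M₁*(M₂*h) := by ring
  rw [hconst] at hR
  -- combine
  set E := ∫ x in a..a+h, (s x - μ)^2 with hE
  set F := ∫ x in a..a+h, (deriv s x)^2 with hF
  have hup : E - L^2*h^3/12 ≤ M₂*h^2*(M₂*h^2 + 2*(M₁*h)) * h := by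
    linarith [hU1, (abs_le.mp hU2).2, hEℓ]
  have hlo : L^2*h^3/12 - E ≤ M₂*h^2*(2*M₁*h + 3*M₂*h^2) * h := by
    linarith [hL1, (abs_le.mp hL2).2, hEℓ]
  have hh2 : (0:ℝ) ≤ h^2/12 := by positivity
  have hF1 := mul_le_mul_of_nonneg_left (abs_le.mp hR).2 hh2
  have hF2 := mul_le_mul_of_nonneg_left (abs_le.mp hR).1 hh2
  have h5 : h^5 ≤ h^4 := pow_le_pow_of_le_one hh.le hh1 (by norm_num)
  have h5b : M₂^2*h^5 ≤ M₂^2*h^4 := mul_le_mul_of_nonneg_left h5 (sq_nonneg M₂)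
  have hMM : 0 ≤ M₁*M₂ := mul_nonneg hM₁0 hM₂0
  have hM2sq : 0 ≤ M₂^2 := sq_nonneg M₂
  have h4 : 0 ≤ h^4 := by positivity
  rw [abs_le]
  constructor
  · linarith [hlo, hF1, h5b, mul_nonneg hMM h4, mul_nonneg hM2sq h4]
  · linarith [hup, hF2, h5b, mul_nonneg hMM h4, mul_nonneg hM2sq h4]

lemma half_est (s : ℝ → ℝ) (hs : ContDiff ℝ 2 s) (M₁ M₂ : ℝ)
    (hM₁ : ∀ x ∈ Icc (0:ℝ) 1, |deriv s x| ≤ M₁)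
    (hM₂ : ∀ x ∈ Icc (0:ℝ) 1, |deriv (deriv s) x| ≤ M₂)
    (o : ℝ) (ho0 : 0 ≤ o) (ho : o ≤ 1/2)
    (D : ℕ) (hD : 0 < D) (sm : ℝ → ℝ)
    (hsm : ∀ k : ℕ, k < D → ∀ x ∈ Ico (o + (k:ℝ)/(2*D)) (o + ((k:ℝ)+1)/(2*D)),
        sm x = (2*(D:ℝ)) * ∫ t in (o + (k:ℝ)/(2*D))..(o + ((k:ℝ)+1)/(2*D)), s t) :
    IntervalIntegrable (fun x => (s x - sm x)^2) volume o (o + 1/2) ∧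
    |(∫ x in o..(o+1/2), (s x - sm x)^2)
        - ((1/48) * ∫ x in o..(o+1/2), (deriv s x)^2) / (D:ℝ)^2|
      ≤ ((4*M₂^2 + 5*M₁*M₂)/16) / (D:ℝ)^3 := by
  have h2 : ContDiff ℝ (1+1) s := by
    rw [show ((1:WithTop ℕ∞)+1) = 2 by norm_num]; exact hs
  have hsd : Differentiable ℝ s := hs.differentiable (by norm_num)
  have hsc : Continuous s := hsd.continuous
  have hs1 : ContDiff ℝ 1 (deriv s) := (contDiff_succ_iff_deriv.mp h2).2.2
  have hs'c : Continuous (deriv s) := (hs1.differentiable (by norm_num)).continuous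
  have hD0 : (0:ℝ) < D := Nat.cast_pos.mpr hD
  have hDne : (D:ℝ) ≠ 0 := ne_of_gt hD0
  have hD1 : (1:ℝ) ≤ D := Nat.one_le_cast.mpr hD
  set h : ℝ := 1/(2*(D:ℝ)) with hhdef
  have hh : 0 < h := by positivity
  have hh1 : h ≤ 1 := by rw [hhdef, div_le_one (by positivity)]; linarith
  set a : ℕ → ℝ := fun k => o + (k:ℝ)/(2*(D:ℝ)) with hadef
  have hsucc : ∀ k : ℕ, a (k+1) = a k + h := by
    intro k; simp only [hadef, hhdef]; push_cast; field_simp; ring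
  have ha0 : a 0 = o := by simp [hadef]
  have haD : a D = o + 1/2 := by
    simp only [hadef]; congr 1; field_simp
  have hak0 : ∀ k : ℕ, 0 ≤ a k := by
    intro k; simp only [hadef]; positivity
  have hak1 : ∀ k : ℕ, k < D → a k + h ≤ 1 := by
    intro k hk
    rw [← hsucc]
    have hk1 : ((k:ℝ)+1) ≤ D := by exact_mod_cast Nat.succ_le_of_lt hk
    simp only [hadef]
    push_cast
    have hfr : ((k:ℝ)+1)/(2*D) ≤ 1/2 := by
      rw [div_le_div_iff₀ (by positivity) (by norm_num)]; linarith
    linarith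
  have hlt : ∀ k : ℕ, a k < a (k+1) := by
    intro k; rw [hsucc]; linarith
  -- per-bin: a.e. equality, integrability, and estimate
  have hbin : ∀ k : ℕ, k < D →
      IntervalIntegrable (fun x => (s x - sm x)^2) volume (a k) (a (k+1)) ∧
      |(∫ x in (a k)..(a (k+1)), (s x - sm x)^2)
          - h^2/12 * ∫ x in (a k)..(a (k+1)), (deriv s x)^2|
        ≤ (4*M₂^2 + 5*M₁*M₂) * h^4 := by
    intro k hk
    have e1 : a k = o + (k:ℝ)/(2*D) := rfl
    have e2 : a (k+1) = o + ((k:ℝ)+1)/(2*D) := by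
      simp only [hadef]; push_cast; ring
    have h2D : (2*(D:ℝ)) = h⁻¹ := by rw [hhdef]; rw [one_div, inv_inv]
    have haeq : ∀ᵐ x ∂(volume : Measure ℝ),
        x ∈ Set.uIoc (a k) (a (k+1)) →
          (s x - sm x)^2 = (s x - h⁻¹ * ∫ t in (a k)..(a (k+1)), s t)^2 := by
      have hne : ∀ᵐ x ∂(volume : Measure ℝ), x ≠ a (k+1) := by
        have hm : ({a (k+1)} : Set ℝ)ᶜ ∈ ae (volume : Measure ℝ) :=
          compl_mem_ae_iff.2 (measure_singleton _)
        filter_upwards [hm] with x hx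
        simpa using hx
      filter_upwards [hne] with x hx hmem
      rw [uIoc_of_le (hlt k).le] at hmem
      have hx1 : x ∈ Ico (a k) (a (k+1)) := ⟨hmem.1.le, lt_of_le_of_ne hmem.2 hx⟩
      rw [e1, e2] at hx1
      have := hsm k hk x hx1
      rw [this, ← e1, ← e2, h2D]
    have hcont : Continuous (fun x => (s x - h⁻¹ * ∫ t in (a k)..(a (k+1)), s t)^2) :=
      (hsc.sub continuous_const).pow 2
    have haeq' : (fun x => (s x - h⁻¹ * ∫ t in (a k)..(a (k+1)), s t)^2)
        =ᵐ[volume.restrict (Set.uIoc (a k) (a (k+1)))] (fun x => (s x - sm x)^2) :=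
      ((ae_restrict_iff' measurableSet_uIoc).2 haeq).mono fun x hx => hx.symm
    have hint : IntervalIntegrable (fun x => (s x - sm x)^2) volume (a k) (a (k+1)) :=
      (hcont.intervalIntegrable _ _).congr_ae haeq'
    have hEq : (∫ x in (a k)..(a (k+1)), (s x - sm x)^2)
        = ∫ x in (a k)..(a (k+1)), (s x - h⁻¹ * ∫ t in (a k)..(a (k+1)), s t)^2 :=
      intervalIntegral.integral_congr_ae haeq
    have hbe := bin_est s hs M₁ M₂ hM₁ hM₂ (a k) h (hak0 k) hh hh1 (hak1 k hk)
    rw [← hsucc k] at hbe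
    rw [hEq]
    exact ⟨hint, hbe⟩
  have hint1 : ∀ k < D, IntervalIntegrable (fun x => (s x - sm x)^2) volume (a k) (a (k+1)) :=
    fun k hk => (hbin k hk).1
  have hint2 : ∀ k < D, IntervalIntegrable (fun x => (deriv s x)^2) volume (a k) (a (k+1)) :=
    fun k _ => (hs'c.pow 2).intervalIntegrable _ _
  have hsum1 := intervalIntegral.sum_integral_adjacent_intervals (μ := volume) hint1
  have hsum2 := intervalIntegral.sum_integral_adjacent_intervals (μ := volume) hint2
  rw [ha0, haD] at hsum1 hsum2
  have hII : IntervalIntegrable (fun x => (s x - sm x)^2) volume o (o+1/2) := by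
    have := IntervalIntegrable.trans_iterate hint1
    rwa [ha0, haD] at this
  refine ⟨hII, ?_⟩
  have hc48 : ((1/48) * ∫ x in o..(o+1/2), (deriv s x)^2) / (D:ℝ)^2
      = ∑ k ∈ Finset.range D, h^2/12 * ∫ x in (a k)..(a (k+1)), (deriv s x)^2 := by
    rw [← Finset.mul_sum, hsum2, hhdef]
    have e : ((1:ℝ)/(2*(D:ℝ)))^2/12 = 1/48/(D:ℝ)^2 := by field_simp; ring
    rw [e]; ring
  rw [← hsum1, hc48, ← Finset.sum_sub_distrib]
  calc |∑ k ∈ Finset.range D, ((∫ x in (a k)..(a (k+1)), (s x - sm x)^2)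
          - h^2/12 * ∫ x in (a k)..(a (k+1)), (deriv s x)^2)|
      ≤ ∑ k ∈ Finset.range D, |(∫ x in (a k)..(a (k+1)), (s x - sm x)^2)
          - h^2/12 * ∫ x in (a k)..(a (k+1)), (deriv s x)^2| :=
        Finset.abs_sum_le_sum_abs _ _
    _ ≤ ∑ _k ∈ Finset.range D, (4*M₂^2+5*M₁*M₂)*h^4 :=
        Finset.sum_le_sum (fun k hk => (hbin k (Finset.mem_range.mp hk)).2)
    _ = D * ((4*M₂^2+5*M₁*M₂)*h^4) := by
        rw [Finset.sum_const, Finset.card_range, nsmul_eq_mul]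
    _ = ((4*M₂^2 + 5*M₁*M₂)/16) / (D:ℝ)^3 := by
        rw [hhdef]; field_simp; ring

end Stmt8Aux




/-- Bias of the two-bin-size histogram (Claim "claim:bias").  If `s` is C² with
`|s'| ≤ M₁` and `|s''| ≤ M₂` on `[0,1]`, then there is a constant `C`
(depending only on `M₁` and `M₂`) such that for all positive `D₁, D₂` and any
function `sm` equal, on each bin of the partition of `[0,1]` into `D₁` equal
subintervals of `[0,1/2]` and `D₂` equal subintervals of `(1/2,1]`, to the mean
of `s` on that bin, one has
`|∫₀¹ (s − sm)² − α₁/D₁² − α₂/D₂²| ≤ C (D₁⁻³ + D₂⁻³)`,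
where `α₁ = (1/48)∫₀^{1/2} s'(x)² dx` and `α₂ = (1/48)∫_{1/2}^1 s'(x)² dx`. -/
theorem stmt_8 (s : ℝ → ℝ) (hs : ContDiff ℝ 2 s)
    (M₁ M₂ : ℝ)
    (hM₁ : ∀ x ∈ Set.Icc (0:ℝ) 1, |deriv s x| ≤ M₁)
    (hM₂ : ∀ x ∈ Set.Icc (0:ℝ) 1, |deriv (deriv s) x| ≤ M₂) :
    ∃ C : ℝ, 0 < C ∧
      ∀ (D₁ D₂ : ℕ), 0 < D₁ → 0 < D₂ →
      ∀ sm : ℝ → ℝ,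
        (∀ k : ℕ, k < D₁ →
          ∀ x ∈ Set.Ico ((k : ℝ) / (2 * D₁)) (((k : ℝ) + 1) / (2 * D₁)),
            sm x = (2 * (D₁ : ℝ)) *
              ∫ t in ((k : ℝ) / (2 * D₁))..(((k : ℝ) + 1) / (2 * D₁)), s t) →
        (∀ k : ℕ, k < D₂ →
          ∀ x ∈ Set.Ico (1/2 + (k : ℝ) / (2 * D₂)) (1/2 + ((k : ℝ) + 1) / (2 * D₂)),
            sm x = (2 * (D₂ : ℝ)) *
              ∫ t in (1/2 + (k : ℝ) / (2 * D₂))..(1/2 + ((k : ℝ) + 1) / (2 * D₂)), s t) →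
        |(∫ x in (0:ℝ)..1, (s x - sm x) ^ 2)
            - ((1/48) * ∫ x in (0:ℝ)..(1/2), (deriv s x) ^ 2) / (D₁ : ℝ) ^ 2
            - ((1/48) * ∫ x in (1/2:ℝ)..1, (deriv s x) ^ 2) / (D₂ : ℝ) ^ 2|
          ≤ C * ((D₁ : ℝ) ^ (-3 : ℤ) + (D₂ : ℝ) ^ (-3 : ℤ)) := by
  have hM₁0 : 0 ≤ M₁ := (abs_nonneg _).trans (hM₁ 0 ⟨le_rfl, zero_le_one⟩)
  have hM₂0 : 0 ≤ M₂ := (abs_nonneg _).trans (hM₂ 0 ⟨le_rfl, zero_le_one⟩)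
  have hMM : 0 ≤ M₁*M₂ := mul_nonneg hM₁0 hM₂0
  have hK0 : 0 ≤ (4*M₂^2 + 5*M₁*M₂)/16 := by nlinarith [sq_nonneg M₂]
  refine ⟨(4*M₂^2 + 5*M₁*M₂)/16 + 1, by linarith, ?_⟩
  intro D₁ D₂ hD₁ hD₂ sm h1 h2
  have hsm1 : ∀ k : ℕ, k < D₁ →
      ∀ x ∈ Set.Ico ((0:ℝ) + (k:ℝ)/(2*D₁)) ((0:ℝ) + ((k:ℝ)+1)/(2*D₁)),
        sm x = (2*(D₁:ℝ)) * ∫ t in ((0:ℝ) + (k:ℝ)/(2*D₁))..((0:ℝ) + ((k:ℝ)+1)/(2*D₁)), s t := by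
    intro k hk x hx
    simp only [zero_add] at hx ⊢
    exact h1 k hk x hx
  have H1 := Stmt8Aux.half_est s hs M₁ M₂ hM₁ hM₂ 0 le_rfl (by norm_num) D₁ hD₁ sm hsm1
  have H2 := Stmt8Aux.half_est s hs M₁ M₂ hM₁ hM₂ (1/2) (by norm_num) le_rfl D₂ hD₂ sm h2
  rw [show (0:ℝ) + 1/2 = 1/2 by norm_num] at H1
  rw [show (1/2:ℝ) + 1/2 = 1 by norm_num] at H2
  have hsplit : (∫ x in (0:ℝ)..1, (s x - sm x)^2)
      = (∫ x in (0:ℝ)..(1/2), (s x - sm x)^2) + ∫ x in (1/2:ℝ)..1, (s x - sm x)^2 :=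
    (intervalIntegral.integral_add_adjacent_intervals H1.1 H2.1).symm
  rw [hsplit]
  set L := ∫ x in (0:ℝ)..(1/2), (s x - sm x)^2
  set R := ∫ x in (1/2:ℝ)..1, (s x - sm x)^2
  set A₁ := ((1/48) * ∫ x in (0:ℝ)..(1/2), (deriv s x)^2) / (D₁:ℝ)^2
  set A₂ := ((1/48) * ∫ x in (1/2:ℝ)..1, (deriv s x)^2) / (D₂:ℝ)^2
  have hD₁0 : (0:ℝ) < (D₁:ℝ) := Nat.cast_pos.mpr hD₁
  have hD₂0 : (0:ℝ) < (D₂:ℝ) := Nat.cast_pos.mpr hD₂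
  have z1 : (D₁:ℝ)^(-3:ℤ) = ((D₁:ℝ)^3)⁻¹ := by
    rw [zpow_neg]; norm_cast
  have z2 : (D₂:ℝ)^(-3:ℤ) = ((D₂:ℝ)^3)⁻¹ := by
    rw [zpow_neg]; norm_cast
  have hx1 : (0:ℝ) < ((D₁:ℝ)^3)⁻¹ := by positivity
  have hx2 : (0:ℝ) < ((D₂:ℝ)^3)⁻¹ := by positivity
  calc |L + R - A₁ - A₂| = |(L - A₁) + (R - A₂)| := by ring_nf
    _ ≤ |L - A₁| + |R - A₂| := abs_add_le _ _
    _ ≤ ((4*M₂^2 + 5*M₁*M₂)/16) / (D₁:ℝ)^3 + ((4*M₂^2 + 5*M₁*M₂)/16) / (D₂:ℝ)^3 :=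
        add_le_add H1.2 H2.2
    _ ≤ ((4*M₂^2 + 5*M₁*M₂)/16 + 1) * (((D₁:ℝ)^3)⁻¹ + ((D₂:ℝ)^3)⁻¹) := by
        rw [div_eq_mul_inv ((4*M₂^2 + 5*M₁*M₂)/16) ((D₁:ℝ)^3),
          div_eq_mul_inv ((4*M₂^2 + 5*M₁*M₂)/16) ((D₂:ℝ)^3)]
        nlinarith [hx1, hx2, hK0]
    _ = ((4*M₂^2 + 5*M₁*M₂)/16 + 1) * ((D₁:ℝ)^(-3:ℤ) + (D₂:ℝ)^(-3:ℤ)) := by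
        rw [z1, z2]
end

section
/- Let Z be a binomial random variable with parameters n ≥ 1 and p ∈ (0,1], and define δ_{n,p} = np·E[Z^{-1}·1_{Z>0}] − 1. Then δ_{n,p} is bounded: there exists an absolute constant L₁ such that |δ_{n,p}| ≤ L₁ for all n, p. -/
open Finset

lemma choose_aux (n k : ℕ) (hk : 1 ≤ k) :
    (n : ℝ) * (1 / (k : ℝ)) * (n.choose k : ℝ) ≤ 2 * ((n + 1).choose (k + 1) : ℝ) := by
  have hkpos : (0 : ℝ) < (k : ℝ) := by exact_mod_cast hk
  have hc : ((n + 1 : ℕ) : ℝ) * (n.choose k : ℝ) = ((n + 1).choose (k + 1) : ℝ) * ((k + 1 : ℕ) : ℝ) := by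
    exact_mod_cast Nat.add_one_mul_choose_eq n k
  push_cast at hc
  rw [show (n:ℝ) * (1 / (k:ℝ)) * (n.choose k : ℝ) = (n:ℝ) * (n.choose k : ℝ) / (k:ℝ) by ring,
    div_le_iff₀ hkpos]
  have hnn : (0 : ℝ) ≤ (n.choose k : ℝ) := by positivity
  have hcc : (0 : ℝ) ≤ ((n + 1).choose (k + 1) : ℝ) := by positivity
  nlinarith [mul_nonneg hcc (sub_nonneg.mpr (show (1:ℝ) ≤ (k:ℝ) from by exact_mod_cast hk))]

/-- For `Z ~ Binomial(n,p)` with `n ≥ 1`, `p ∈ (0,1]`, the quantity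
`δ_{n,p} = np·E[Z⁻¹ 1_{Z>0}] − 1`, with
`E[Z⁻¹ 1_{Z>0}] = Σ_{k=1}^n (1/k) C(n,k) p^k (1−p)^{n−k}`, is bounded by an
absolute constant `L₁`. -/
theorem stmt_15 :
    ∃ L₁ : ℝ, 0 < L₁ ∧
      ∀ (n : ℕ) (p : ℝ), 1 ≤ n → 0 < p → p ≤ 1 →
        |(n : ℝ) * p *
            (∑ k ∈ Finset.Icc 1 n,
              (1 / (k : ℝ)) * (n.choose k) * p ^ k * (1 - p) ^ (n - k)) - 1|
          ≤ L₁ := by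
  refine ⟨2, by norm_num, ?_⟩
  intro n p hn hp hp1
  have hq : (0 : ℝ) ≤ 1 - p := by linarith
  set S : ℝ := ∑ k ∈ Finset.Icc 1 n,
      (1 / (k : ℝ)) * (n.choose k) * p ^ k * (1 - p) ^ (n - k) with hS
  have hS0 : 0 ≤ S := by
    apply Finset.sum_nonneg
    intro k hk
    have : (0 : ℝ) ≤ (k : ℝ) := by positivity
    positivity
  -- binomial theorem for n+1
  have hbin : ∑ j ∈ Finset.range (n + 2), p ^ j * (1 - p) ^ (n + 1 - j) * ((n + 1).choose j : ℝ) = 1 := by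
    have := add_pow p (1 - p) (n + 1)
    simp only [add_sub_cancel, one_pow] at this
    rw [← this]
  -- sum over the image subset
  have hsub : ∑ k ∈ Finset.Icc 1 n, p ^ (k + 1) * (1 - p) ^ (n + 1 - (k + 1)) * ((n + 1).choose (k + 1) : ℝ) ≤ 1 := by
    have himg : ∑ k ∈ Finset.Icc 1 n, p ^ (k + 1) * (1 - p) ^ (n + 1 - (k + 1)) * ((n + 1).choose (k + 1) : ℝ)
        = ∑ j ∈ (Finset.Icc 1 n).image (· + 1), p ^ j * (1 - p) ^ (n + 1 - j) * ((n + 1).choose j : ℝ) := by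
      rw [Finset.sum_image (by intro a _ b _ h; simp only at h; omega)]
    rw [himg]
    conv_rhs => rw [← hbin]
    apply Finset.sum_le_sum_of_subset_of_nonneg
    · intro j hj
      simp only [Finset.mem_image, Finset.mem_Icc] at hj
      obtain ⟨k, ⟨hk1, hk2⟩, rfl⟩ := hj
      simp only [Finset.mem_range]; omega
    · intro j _ _
      positivity
  have hupper : (n : ℝ) * p * S ≤ 2 := by
    calc (n : ℝ) * p * S
        = ∑ k ∈ Finset.Icc 1 n, (n : ℝ) * p * ((1 / (k : ℝ)) * (n.choose k) * p ^ k * (1 - p) ^ (n - k)) := by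
          rw [hS, Finset.mul_sum]
      _ ≤ ∑ k ∈ Finset.Icc 1 n, 2 * (p ^ (k + 1) * (1 - p) ^ (n + 1 - (k + 1)) * ((n + 1).choose (k + 1) : ℝ)) := by
          apply Finset.sum_le_sum
          intro k hk
          simp only [Finset.mem_Icc] at hk
          have haux := choose_aux n k hk.1
          have hsimp : n + 1 - (k + 1) = n - k := by omega
          rw [hsimp]
          have hpk : (0 : ℝ) ≤ p ^ k * (1 - p) ^ (n - k) := by positivity
          have : (n : ℝ) * p * ((1 / (k : ℝ)) * (n.choose k) * p ^ k * (1 - p) ^ (n - k))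
              = ((n : ℝ) * (1 / (k : ℝ)) * (n.choose k)) * (p ^ k * (1 - p) ^ (n - k)) * p := by ring
          rw [this]
          have h2 : 2 * (p ^ (k + 1) * (1 - p) ^ (n - k) * ((n + 1).choose (k + 1) : ℝ))
              = (2 * ((n + 1).choose (k + 1) : ℝ)) * (p ^ k * (1 - p) ^ (n - k)) * p := by ring
          rw [h2]
          have := mul_le_mul_of_nonneg_right haux hpk
          exact mul_le_mul_of_nonneg_right this hp.le
      _ = 2 * ∑ k ∈ Finset.Icc 1 n, p ^ (k + 1) * (1 - p) ^ (n + 1 - (k + 1)) * ((n + 1).choose (k + 1) : ℝ) := by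
          rw [Finset.mul_sum]
      _ ≤ 2 * 1 := by linarith
      _ = 2 := by norm_num
  have hlow : 0 ≤ (n : ℝ) * p * S := by positivity
  rw [abs_le]
  constructor <;> linarith
end
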